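/- For all γ, ν, m ∈ ℕ the following products of quadratic Fourier coefficients vanish: 𝔠̄_{γ,ν,3γ+4}·𝔠̄_{γ,γ,ν} = 0; 𝔠̄_{2γ+m+4,ν,m}·𝔠̄_{γ,γ,ν} = 0; 𝔠̄_{γ,ν,m}·𝔠̄_{2γ+m+4,γ,ν} = 0; and, if moreover m ≥ 2γ + 4, also 𝔠̄_{γ,ν,m}·𝔠̄_{γ,m−2γ−4,ν} = 0 and 𝔠̄_{m−2γ−4,ν,m}·𝔠̄_{γ,γ,ν} = 0. -/

import Mathlib

open MeasureTheory

/-- Gegenbauer (ultraspherical) polynomial `C_n^{(2)}` of degree `n` with parameter `2`,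
as a real-valued function. -/
noncomputable def geg (n : ℕ) (y : ℝ) : ℝ :=
  ∑ k ∈ Finset.range (n / 2 + 1),
    (-1:ℝ) ^ k *
      ((Nat.factorial (n - k + 1) : ℝ) /
        ((Nat.factorial k : ℝ) * (Nat.factorial (n - 2 * k) : ℝ))) *
      (2 * y) ^ (n - 2 * k)

/-- The normalization constant `𝔴_n = √(8/π)/√((n+1)(n+3))`. -/
noncomputable def wYM (n : ℕ) : ℝ :=
  Real.sqrt (8 / Real.pi) / Real.sqrt (((n:ℝ) + 1) * ((n:ℝ) + 3))

/-- The quadratic Fourier coefficients `𝔠̄_{ijm}` of the spherically symmetric equivariant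
Yang–Mills equation on the Einstein cylinder. -/
noncomputable def cbar (i j m : ℕ) : ℝ :=
  wYM i * wYM j * wYM m *
    ∫ y in (-1:ℝ)..1, geg i y * geg j y * geg m y * (1 - y ^ 2) ^ ((3:ℝ) / 2)

/-- The cubic Fourier coefficients `𝔠_{ijkm}` of the spherically symmetric equivariant
Yang–Mills equation on the Einstein cylinder. -/
noncomputable def cquad (i j k m : ℕ) : ℝ :=
  wYM i * wYM j * wYM k * wYM m *
    ∫ y in (-1:ℝ)..1, geg i y * geg j y * geg k y * geg m y * (1 - y ^ 2) ^ ((5:ℝ) / 2)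

/-! ### Auxiliary machinery: Gegenbauer orthogonality -/

/-- Padded summand of `geg`. -/
noncomputable def gterm (n k : ℕ) (y : ℝ) : ℝ :=
  if 2 * k ≤ n then
    (-1:ℝ) ^ k *
      ((Nat.factorial (n - k + 1) : ℝ) /
        ((Nat.factorial k : ℝ) * (Nat.factorial (n - 2 * k) : ℝ))) *
      (2 * y) ^ (n - 2 * k)
  else 0

lemma geg_eq_sum (n : ℕ) (N : ℕ) (hN : n / 2 + 1 ≤ N) (y : ℝ) :
    geg n y = ∑ k ∈ Finset.range N, gterm n k y := by
  rw [geg]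
  rw [show (∑ k ∈ Finset.range (n / 2 + 1),
      (-1:ℝ) ^ k *
      ((Nat.factorial (n - k + 1) : ℝ) /
        ((Nat.factorial k : ℝ) * (Nat.factorial (n - 2 * k) : ℝ))) *
      (2 * y) ^ (n - 2 * k)) = ∑ k ∈ Finset.range (n / 2 + 1), gterm n k y from
    Finset.sum_congr rfl (fun k hk => by
      rw [gterm, if_pos]
      simp only [Finset.mem_range] at hk
      omega)]
  exact Finset.sum_subset (Finset.range_subset_range.2 hN) (fun k _ hk => by
    simp only [Finset.mem_range] at hk
    rw [gterm, if_neg]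
    omega)

lemma gterm_rec (n k : ℕ) (y : ℝ) :
    ((n:ℝ) + 2) * gterm (n+2) (k+1) y + ((n:ℝ) + 4) * gterm n k y
      = 2 * ((n:ℝ) + 3) * y * gterm (n+1) (k+1) y := by
  rcases le_or_gt (2*k+1) n with h | h
  · obtain ⟨d, rfl⟩ : ∃ d, n = 2*k+1+d := ⟨n - 2*k - 1, by omega⟩
    rw [gterm, gterm, gterm, if_pos (by omega), if_pos (by omega), if_pos (by omega)]
    rw [show 2*k+1+d+2 - (k+1) + 1 = k+d+3 by omega,
        show 2*k+1+d+2 - 2*(k+1) = d+1 by omega,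
        show 2*k+1+d - k + 1 = k+d+2 by omega,
        show 2*k+1+d - 2*k = d+1 by omega,
        show 2*k+1+d+1 - (k+1) + 1 = k+d+2 by omega,
        show 2*k+1+d+1 - 2*(k+1) = d by omega]
    have e1 : Nat.factorial (k+d+3) = (k+d+3) * Nat.factorial (k+d+2) := rfl
    have e2 : Nat.factorial (d+1) = (d+1) * Nat.factorial d := rfl
    have e3 : Nat.factorial (k+1) = (k+1) * Nat.factorial k := rfl
    have h1 : (Nat.factorial k : ℝ) ≠ 0 := Nat.cast_ne_zero.2 (Nat.factorial_ne_zero k)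
    have h2 : (Nat.factorial d : ℝ) ≠ 0 := Nat.cast_ne_zero.2 (Nat.factorial_ne_zero d)
    rw [e1, e2, e3]
    have hp : (2*y) ^ (d+1) = (2*y)^d * (2*y) := pow_succ _ _
    rw [hp]
    push_cast
    field_simp
    ring
  · rcases le_or_gt (2*k) n with h2 | h2
    · have hn : n = 2*k := by omega
      subst hn
      rw [gterm, gterm, gterm, if_pos (by omega), if_pos (by omega), if_neg (by omega)]
      rw [show 2*k+2 - (k+1) + 1 = k+2 by omega,
          show 2*k+2 - 2*(k+1) = 0 by omega,
          show 2*k - k + 1 = k+1 by omega,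
          show 2*k - 2*k = 0 by omega]
      have e1 : Nat.factorial (k+2) = (k+2) * ((k+1) * Nat.factorial k) := rfl
      have e3 : Nat.factorial (k+1) = (k+1) * Nat.factorial k := rfl
      have h1 : (Nat.factorial k : ℝ) ≠ 0 := Nat.cast_ne_zero.2 (Nat.factorial_ne_zero k)
      rw [e1, e3]
      push_cast
      field_simp
      ring
    · rw [gterm, gterm, gterm, if_neg (by omega), if_neg (by omega), if_neg (by omega)]
      ring

lemma geg_rec (n : ℕ) (y : ℝ) :
    ((n:ℝ) + 2) * geg (n+2) y
      = 2 * ((n:ℝ) + 3) * y * geg (n+1) y - ((n:ℝ) + 4) * geg n y := by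
  have hk0 : ((n:ℝ) + 2) * gterm (n+2) 0 y = 2 * ((n:ℝ) + 3) * y * gterm (n+1) 0 y := by
    rw [gterm, gterm, if_pos (by omega), if_pos (by omega)]
    simp only [Nat.mul_zero, Nat.sub_zero, Nat.factorial_zero, Nat.cast_one, one_mul]
    have e1 : Nat.factorial (n+2+1) = (n+3) * Nat.factorial (n+2) := rfl
    have e2 : Nat.factorial (n+1+1) = (n+2) * Nat.factorial (n+1) := rfl
    have h1 : (Nat.factorial (n+1) : ℝ) ≠ 0 := Nat.cast_ne_zero.2 (Nat.factorial_ne_zero _)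
    have hp : (2*y) ^ (n+2) = (2*y)^(n+1) * (2*y) := pow_succ _ _
    rw [e1, e2, hp]
    push_cast
    field_simp
  rw [geg_eq_sum (n+2) (n+3) (by omega) y, geg_eq_sum (n+1) (n+3) (by omega) y,
      geg_eq_sum n (n+2) (by omega) y, Finset.mul_sum, Finset.mul_sum, Finset.mul_sum,
      Finset.sum_range_succ' (fun k => ((n:ℝ)+2) * gterm (n+2) k y) (n+2),
      Finset.sum_range_succ' (fun k => 2*((n:ℝ)+3)*y * gterm (n+1) k y) (n+2)]
  rw [eq_sub_iff_add_eq, add_right_comm, hk0]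
  congr 1
  rw [← Finset.sum_add_distrib]
  exact Finset.sum_congr rfl (fun k _ => gterm_rec n k y)

lemma Srec (n : ℕ) (θ : ℝ) :
    ((n:ℝ)+2) * ((((n:ℝ)+5) * Real.sin (((n:ℝ)+3)*θ) - ((n:ℝ)+3) * Real.sin (((n:ℝ)+5)*θ)) / 4)
    = 2*((n:ℝ)+3)*Real.cos θ * ((((n:ℝ)+4) * Real.sin (((n:ℝ)+2)*θ) - ((n:ℝ)+2) * Real.sin (((n:ℝ)+4)*θ)) / 4)
      - ((n:ℝ)+4) * ((((n:ℝ)+3) * Real.sin (((n:ℝ)+1)*θ) - ((n:ℝ)+1) * Real.sin (((n:ℝ)+3)*θ)) / 4) := by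
  rw [show ((n:ℝ)+5)*θ = ((n:ℝ)+4)*θ + θ by ring, Real.sin_add]
  rw [show ((n:ℝ)+4)*θ = ((n:ℝ)+3)*θ + θ by ring, Real.sin_add, Real.cos_add]
  rw [show ((n:ℝ)+3)*θ = ((n:ℝ)+2)*θ + θ by ring, Real.sin_add, Real.cos_add]
  rw [show ((n:ℝ)+2)*θ = ((n:ℝ)+1)*θ + θ by ring, Real.sin_add, Real.cos_add]
  linear_combination
    ((((n:ℝ)^2+5*n+6)/4) * (Real.cos θ^2 - Real.sin θ^2) * Real.sin (((n:ℝ)+1)*θ)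
      + (((n:ℝ)^2+5*n+6)/2) * Real.sin θ * Real.cos θ * Real.cos (((n:ℝ)+1)*θ)
      - (((n:ℝ)^2+7*n+12)/4) * Real.sin (((n:ℝ)+1)*θ)) * Real.sin_sq_add_cos_sq θ

lemma geg_zero (y : ℝ) : geg 0 y = 1 := by norm_num [geg]

lemma geg_one (y : ℝ) : geg 1 y = 4 * y := by norm_num [geg, Nat.factorial]; ring

lemma geg_trig (n : ℕ) (θ : ℝ) :
    geg n (Real.cos θ) * Real.sin θ ^ 3
      = (((n:ℝ)+3) * Real.sin (((n:ℝ)+1)*θ) - ((n:ℝ)+1) * Real.sin (((n:ℝ)+3)*θ)) / 4 := by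
  induction n using Nat.twoStepInduction with
  | zero =>
      rw [geg_zero]
      norm_num
      nlinarith [Real.sin_three_mul θ]
  | one =>
      rw [geg_one]
      norm_num
      rw [show (4:ℝ)*θ = 2*θ+2*θ by ring, Real.sin_add, Real.sin_two_mul, Real.cos_two_mul]
      linear_combination (4*Real.sin θ*Real.cos θ) * Real.sin_sq_add_cos_sq θ
  | more n ih0 ih1 =>
      push_cast at ih1
      rw [show ((n:ℝ)+1+1)*θ = ((n:ℝ)+2)*θ by ring,
          show ((n:ℝ)+1+3)*θ = ((n:ℝ)+4)*θ by ring] at ih1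
      have hrec := geg_rec n (Real.cos θ)
      have hS := Srec n θ
      have h2 : ((n:ℝ)+2) ≠ 0 := by positivity
      have key : ((n:ℝ)+2) * (geg (n+2) (Real.cos θ) * Real.sin θ ^ 3)
          = ((n:ℝ)+2) * (((((n:ℕ):ℝ)+5) * Real.sin (((n:ℝ)+3)*θ)
              - (((n:ℕ):ℝ)+3) * Real.sin (((n:ℝ)+5)*θ)) / 4) := by
        linear_combination (Real.sin θ^3) * hrec + (2*((n:ℝ)+3)*Real.cos θ) * ih1
          - (((n:ℝ)+4)) * ih0 - hS
      have key2 := mul_left_cancel₀ h2 key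
      push_cast
      rw [show ((n:ℝ)+2+1)*θ = ((n:ℝ)+3)*θ by ring, show ((n:ℝ)+2+3)*θ = ((n:ℝ)+5)*θ by ring]
      rw [key2]; ring

lemma cont_aux (a : ℝ) (k : ℕ) :
    Continuous fun θ : ℝ => (Real.cos θ)^k * Real.sin θ * Real.sin (a*θ) := by
  fun_prop

lemma int_cos_pi (a : ℕ) (ha : 0 < a) :
    ∫ θ in (0:ℝ)..Real.pi, Real.cos ((a:ℝ)*θ) = 0 := by
  have hc : ((a:ℝ)) ≠ 0 := by positivity
  rw [intervalIntegral.integral_comp_mul_left Real.cos hc, mul_zero, integral_cos]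
  simp [Real.sin_nat_mul_pi]

lemma sin_orth (k : ℕ) : ∀ j : ℕ, k + 2 ≤ j →
    ∫ θ in (0:ℝ)..Real.pi, (Real.cos θ)^k * Real.sin θ * Real.sin ((j:ℝ)*θ) = 0 := by
  induction k with
  | zero =>
      intro j hj
      have h1 : (1:ℕ) ≤ j := by omega
      have point : ∀ θ : ℝ, (Real.cos θ)^0 * Real.sin θ * Real.sin ((j:ℝ)*θ)
          = (Real.cos (((j-1:ℕ):ℝ)*θ) - Real.cos (((j+1:ℕ):ℝ)*θ))/2 := by
        intro θ
        push_cast [h1]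
        rw [show ((j:ℝ)-1)*θ = (j:ℝ)*θ - θ by ring, show ((j:ℝ)+1)*θ = (j:ℝ)*θ + θ by ring,
            Real.cos_sub, Real.cos_add]
        ring
      rw [intervalIntegral.integral_congr (fun θ _ => point θ), intervalIntegral.integral_div,
          intervalIntegral.integral_sub
            ((by fun_prop : Continuous fun θ:ℝ => Real.cos (((j-1:ℕ):ℝ)*θ)).intervalIntegrable _ _)
            ((by fun_prop : Continuous fun θ:ℝ => Real.cos (((j+1:ℕ):ℝ)*θ)).intervalIntegrable _ _),
          int_cos_pi (j-1) (by omega), int_cos_pi (j+1) (by omega)]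
      norm_num
  | succ k ih =>
      intro j hj
      have h1 : (1:ℕ) ≤ j := by omega
      have point : ∀ θ : ℝ, (Real.cos θ)^(k+1) * Real.sin θ * Real.sin ((j:ℝ)*θ)
          = ((Real.cos θ)^k * Real.sin θ * Real.sin (((j+1:ℕ):ℝ)*θ)
             + (Real.cos θ)^k * Real.sin θ * Real.sin (((j-1:ℕ):ℝ)*θ))/2 := by
        intro θ
        push_cast [h1]
        rw [show ((j:ℝ)+1)*θ = (j:ℝ)*θ + θ by ring, show ((j:ℝ)-1)*θ = (j:ℝ)*θ - θ by ring,
            Real.sin_add, Real.sin_sub]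
        ring
      rw [intervalIntegral.integral_congr (fun θ _ => point θ), intervalIntegral.integral_div,
          intervalIntegral.integral_add ((cont_aux _ k).intervalIntegrable _ _)
            ((cont_aux _ k).intervalIntegrable _ _),
          ih (j+1) (by omega), ih (j-1) (by omega)]
      norm_num

/-- Polynomial representation of `geg`. -/
noncomputable def gp (n : ℕ) : Polynomial ℝ :=
  ∑ k ∈ Finset.range (n / 2 + 1),
    Polynomial.C ((-1:ℝ) ^ k *
      ((Nat.factorial (n - k + 1) : ℝ) /
        ((Nat.factorial k : ℝ) * (Nat.factorial (n - 2 * k) : ℝ))) * 2 ^ (n - 2 * k)) *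
      Polynomial.X ^ (n - 2 * k)

lemma gp_eval (n : ℕ) (y : ℝ) : (gp n).eval y = geg n y := by
  rw [gp, geg, Polynomial.eval_finset_sum]
  exact Finset.sum_congr rfl fun k _ => by simp [mul_pow]; ring

lemma gp_deg (n : ℕ) : (gp n).natDegree ≤ n :=
  Polynomial.natDegree_sum_le_of_forall_le _ _ fun k hk =>
    le_trans (Polynomial.natDegree_C_mul_le _ _)
      (le_trans (Polynomial.natDegree_X_pow_le (n - 2 * k)) (by omega))

lemma geg_cont (n : ℕ) : Continuous (geg n) := by
  have : geg n = fun y => (gp n).eval y := by funext y; rw [gp_eval]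
  rw [this]; exact (gp n).continuous

lemma geg_orth (i j m : ℕ) (h : i + j < m) :
    (∫ y in (-1:ℝ)..1, geg i y * geg j y * geg m y * (1 - y^2) ^ ((3:ℝ)/2)) = 0 := by
  set G : ℝ → ℝ := fun y => geg i y * geg j y * geg m y * (Real.sqrt (1 - y^2))^3 with hG
  have hGcont : Continuous G := by
    apply ((((geg_cont i).mul (geg_cont j)).mul (geg_cont m)).mul ?_)
    exact (Real.continuous_sqrt.comp (by fun_prop)).pow 3
  have step1 : (∫ y in (-1:ℝ)..1, geg i y * geg j y * geg m y * (1 - y^2) ^ ((3:ℝ)/2))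
      = ∫ y in (-1:ℝ)..1, G y := by
    apply intervalIntegral.integral_congr
    intro y hy
    have hy' : y ∈ Set.Icc (-1:ℝ) 1 := by
      rwa [Set.uIcc_of_le (by norm_num : (-1:ℝ) ≤ 1)] at hy
    have h0 : (0:ℝ) ≤ 1 - y^2 := by nlinarith [hy'.1, hy'.2]
    have : (1 - y^2) ^ ((3:ℝ)/2) = (Real.sqrt (1 - y^2))^3 := by
      rw [Real.sqrt_eq_rpow, ← Real.rpow_natCast ((1-y^2) ^ ((1:ℝ)/2)) 3,
          ← Real.rpow_mul h0]
      norm_num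
    rw [hG]; dsimp only; rw [this]
  have hder : ∀ x ∈ Set.uIcc (0:ℝ) Real.pi, HasDerivAt Real.cos (-Real.sin x) x :=
    fun x _ => Real.hasDerivAt_cos x
  have step2 : (∫ y in (-1:ℝ)..1, G y) = ∫ θ in (0:ℝ)..Real.pi, Real.sin θ * G (Real.cos θ) := by
    have h1 := intervalIntegral.integral_comp_smul_deriv hder
      ((Real.continuous_sin.neg).continuousOn) hGcont
    rw [Real.cos_zero, Real.cos_pi] at h1
    have h2 : (∫ θ in (0:ℝ)..Real.pi, (-Real.sin θ) • (G ∘ Real.cos) θ)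
        = ∫ θ in (0:ℝ)..Real.pi, -(Real.sin θ * G (Real.cos θ)) := by
      apply intervalIntegral.integral_congr; intro θ _; simp [smul_eq_mul]
    rw [h2, intervalIntegral.integral_neg] at h1
    rw [intervalIntegral.integral_symm (-1:ℝ) 1] at h1
    linarith [h1]
  rw [step1, step2]
  have step3 : (∫ θ in (0:ℝ)..Real.pi, Real.sin θ * G (Real.cos θ))
      = ∫ θ in (0:ℝ)..Real.pi, ∑ r ∈ Finset.range (i + j + 1),
          ((gp i * gp j).coeff r) * ((Real.cos θ)^r * Real.sin θ *
            ((((m:ℝ)+3) * Real.sin (((m:ℝ)+1)*θ) - ((m:ℝ)+1) * Real.sin (((m:ℝ)+3)*θ)) / 4)) := by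
    apply intervalIntegral.integral_congr
    intro θ hθ
    have hθ' : θ ∈ Set.Icc (0:ℝ) Real.pi := by
      rwa [Set.uIcc_of_le Real.pi_pos.le] at hθ
    have hs : 0 ≤ Real.sin θ := Real.sin_nonneg_of_nonneg_of_le_pi hθ'.1 hθ'.2
    have hsin3 : (Real.sqrt (1 - Real.cos θ^2))^3 = Real.sin θ^3 := by
      rw [show (1 - Real.cos θ^2) = Real.sin θ^2 by nlinarith [Real.sin_sq_add_cos_sq θ],
          Real.sqrt_sq hs]
    have hev : geg i (Real.cos θ) * geg j (Real.cos θ)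
        = ∑ r ∈ Finset.range (i + j + 1), ((gp i * gp j).coeff r) * (Real.cos θ)^r := by
      rw [← gp_eval, ← gp_eval, ← Polynomial.eval_mul]
      exact Polynomial.eval_eq_sum_range'
        (lt_of_le_of_lt (Polynomial.natDegree_mul_le.trans (add_le_add (gp_deg i) (gp_deg j)))
          (Nat.lt_succ_self _)) _
    have htrig := geg_trig m θ
    rw [hG]; dsimp only
    rw [hsin3.symm] at htrig
    calc Real.sin θ * (geg i (Real.cos θ) * geg j (Real.cos θ) * geg m (Real.cos θ)
            * (Real.sqrt (1 - Real.cos θ^2))^3)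
        = (geg i (Real.cos θ) * geg j (Real.cos θ)) * Real.sin θ *
            (geg m (Real.cos θ) * (Real.sqrt (1 - Real.cos θ^2))^3) := by ring
      _ = (∑ r ∈ Finset.range (i + j + 1), ((gp i * gp j).coeff r) * (Real.cos θ)^r)
            * Real.sin θ *
            ((((m:ℝ)+3) * Real.sin (((m:ℝ)+1)*θ) - ((m:ℝ)+1) * Real.sin (((m:ℝ)+3)*θ)) / 4) := by
          rw [hev, htrig]
      _ = _ := by rw [Finset.sum_mul, Finset.sum_mul]; exact Finset.sum_congr rfl fun r _ => by ring
  rw [step3]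
  rw [intervalIntegral.integral_finset_sum (fun r _ => by
    apply Continuous.intervalIntegrable; fun_prop)]
  apply Finset.sum_eq_zero
  intro r hr
  simp only [Finset.mem_range] at hr
  have o1 : ∫ θ in (0:ℝ)..Real.pi, (Real.cos θ)^r * Real.sin θ * Real.sin (((m:ℝ)+1)*θ) = 0 := by
    have := sin_orth r (m+1) (by omega); push_cast at this; exact this
  have o3 : ∫ θ in (0:ℝ)..Real.pi, (Real.cos θ)^r * Real.sin θ * Real.sin (((m:ℝ)+3)*θ) = 0 := by
    have := sin_orth r (m+3) (by omega); push_cast at this; exact this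
  rw [intervalIntegral.integral_const_mul]
  have hpt : ∀ θ : ℝ, (Real.cos θ)^r * Real.sin θ *
      ((((m:ℝ)+3) * Real.sin (((m:ℝ)+1)*θ) - ((m:ℝ)+1) * Real.sin (((m:ℝ)+3)*θ)) / 4)
      = (((m:ℝ)+3)/4) * ((Real.cos θ)^r * Real.sin θ * Real.sin (((m:ℝ)+1)*θ))
        - (((m:ℝ)+1)/4) * ((Real.cos θ)^r * Real.sin θ * Real.sin (((m:ℝ)+3)*θ)) := by
    intro θ; ring
  rw [intervalIntegral.integral_congr (fun θ _ => hpt θ),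
      intervalIntegral.integral_sub
        ((by fun_prop : Continuous fun θ : ℝ => (((m:ℝ)+3)/4) * ((Real.cos θ)^r * Real.sin θ * Real.sin (((m:ℝ)+1)*θ))).intervalIntegrable _ _)
        ((by fun_prop : Continuous fun θ : ℝ => (((m:ℝ)+1)/4) * ((Real.cos θ)^r * Real.sin θ * Real.sin (((m:ℝ)+3)*θ))).intervalIntegrable _ _),
      intervalIntegral.integral_const_mul, intervalIntegral.integral_const_mul, o1, o3]
  ring

lemma cbar_comm12 (i j m : ℕ) : cbar i j m = cbar j i m := by
  rw [cbar, cbar]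
  rw [intervalIntegral.integral_congr
    (fun y _ => by ring :
      ∀ y ∈ Set.uIcc (-1:ℝ) 1,
        geg i y * geg j y * geg m y * (1 - y ^ 2) ^ ((3:ℝ)/2)
          = geg j y * geg i y * geg m y * (1 - y ^ 2) ^ ((3:ℝ)/2))]
  ring

lemma cbar_comm23 (i j m : ℕ) : cbar i j m = cbar i m j := by
  rw [cbar, cbar]
  rw [intervalIntegral.integral_congr
    (fun y _ => by ring :
      ∀ y ∈ Set.uIcc (-1:ℝ) 1,
        geg i y * geg j y * geg m y * (1 - y ^ 2) ^ ((3:ℝ)/2)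
          = geg i y * geg m y * geg j y * (1 - y ^ 2) ^ ((3:ℝ)/2))]
  ring

lemma cbar_zero₃ {i j m : ℕ} (h : i + j < m) : cbar i j m = 0 := by
  rw [cbar, geg_orth i j m h, mul_zero]

lemma cbar_zero₁ {i j m : ℕ} (h : j + m < i) : cbar i j m = 0 := by
  rw [cbar_comm12, cbar_comm23, cbar_zero₃ h]

lemma cbar_zero₂ {i j m : ℕ} (h : i + m < j) : cbar i j m = 0 := by
  rw [cbar_comm23, cbar_zero₃ h]

/-- Vanishing products of quadratic Yang–Mills Fourier coefficients. -/
theorem cbar_products_vanish (γ ν m : ℕ) :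
    cbar γ ν (3 * γ + 4) * cbar γ γ ν = 0 ∧
      cbar (2 * γ + m + 4) ν m * cbar γ γ ν = 0 ∧
      cbar γ ν m * cbar (2 * γ + m + 4) γ ν = 0 ∧
      (2 * γ + 4 ≤ m →
        cbar γ ν m * cbar γ (m - 2 * γ - 4) ν = 0 ∧
          cbar (m - 2 * γ - 4) ν m * cbar γ γ ν = 0) := by
  refine ⟨?_, ?_, ?_, fun hm => ⟨?_, ?_⟩⟩
  · rcases le_or_gt ν (2*γ) with hv | hv
    · exact mul_eq_zero_of_left (cbar_zero₃ (by omega)) _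
    · exact mul_eq_zero_of_right _ (cbar_zero₃ (by omega))
  · rcases le_or_gt ν (2*γ) with hv | hv
    · exact mul_eq_zero_of_left (cbar_zero₁ (by omega)) _
    · exact mul_eq_zero_of_right _ (cbar_zero₃ (by omega))
  · rcases le_or_gt ν (γ + m + 3) with hv | hv
    · exact mul_eq_zero_of_right _ (cbar_zero₁ (by omega))
    · exact mul_eq_zero_of_left (cbar_zero₂ (by omega)) _
  · rcases le_or_gt m (γ + ν) with hv | hv
    · exact mul_eq_zero_of_right _ (cbar_zero₃ (by omega))
    · exact mul_eq_zero_of_left (cbar_zero₃ (by omega)) _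
  · rcases le_or_gt ν (2*γ) with hv | hv
    · exact mul_eq_zero_of_left (cbar_zero₃ (by omega)) _
    · exact mul_eq_zero_of_right _ (cbar_zero₃ (by omega))
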